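/- Every forest admits an edge-coloring with 2 colors such that each color class induces a subgraph in which every non-isolated vertex has odd degree. -/

import Mathlib

open SimpleGraph

-- leaf existence
lemma exists_leaf {V : Type*} [Fintype V] {G : SimpleGraph V} (hG : G.IsAcyclic)
    (hE : G.edgeSet.Nonempty) : ∃ l c, G.Adj l c ∧ ∀ w, G.Adj l w → w = c := by
  classical
  obtain ⟨e, he⟩ := hE
  induction e using Sym2.ind with
  | _ a b =>
  rw [SimpleGraph.mem_edgeSet] at he
  set S : Set ℕ := {n | ∃ (x y : V) (p : G.Walk x y), p.IsPath ∧ p.length = n} with hS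
  have h1 : 1 ∈ S := by
    refine ⟨a, b, Walk.cons he Walk.nil, ?_, rfl⟩
    simp [Walk.cons_isPath_iff, he.ne]
  have hbdd : BddAbove S := by
    refine ⟨Fintype.card V, ?_⟩
    rintro n ⟨x, y, p, hp, rfl⟩
    exact le_of_lt hp.length_lt
  have hmem : sSup S ∈ S := Nat.sSup_mem ⟨1, h1⟩ hbdd
  obtain ⟨x, y, p, hp, hlen⟩ := hmem
  have hL1 : 1 ≤ p.length := by
    rw [hlen]; exact le_csSup hbdd h1
  set r := p.reverse with hr
  have hrp : r.IsPath := hp.reverse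
  have hrlen : r.length = p.length := p.length_reverse
  -- r : Walk y x, length ≥ 1, so cons
  clear_value r
  clear hr
  cases r with
  | nil => simp at hrlen; omega
  | @cons _ c _ hyc t =>
    refine ⟨y, c, hyc, ?_⟩
    intro w hyw
    by_cases hw : w ∈ (Walk.cons hyc t).support
    · -- use path uniqueness
      have hq := hrp.takeUntil hw
      have h2 : (Walk.cons hyw Walk.nil).IsPath := by
        simp [Walk.cons_isPath_iff, hyw.ne]
      have := hG.path_unique ⟨(Walk.cons hyc t).takeUntil w hw, hq⟩ ⟨Walk.cons hyw Walk.nil, h2⟩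
      have heq : (Walk.cons hyc t).takeUntil w hw = Walk.cons hyw Walk.nil :=
        congrArg Subtype.val this
      have hspec := ((Walk.cons hyc t).take_spec hw)
      rw [heq] at hspec
      -- hspec : (cons hyw nil).append (dropUntil ...) = cons hyc t
      have := congrArg (fun q => q.getVert 1) hspec
      simpa [Walk.getVert_cons_succ, Walk.getVert_zero] using this
    · -- extend the path: contradiction with maximality
      exfalso
      have hp' : (Walk.cons (hyw.symm) ((Walk.cons hyc t).reverse).reverse).IsPath := by
        rw [Walk.reverse_reverse]
        exact Walk.IsPath.cons hrp (by exact hw)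
      have : ((Walk.cons (hyw.symm) ((Walk.cons hyc t).reverse).reverse)).length ∈ S := by
        exact ⟨w, x, _, hp', rfl⟩
      have hle := le_csSup hbdd this
      rw [← hlen] at hle
      simp only [Walk.length_cons, Walk.reverse_reverse] at hle
      simp only [Walk.length_cons] at hrlen
      omega

lemma fin2_cases (a b : Fin 2) : a = b ∨ a = b + 1 := by omega

lemma fin2_succ_ne (a : Fin 2) : a + 1 ≠ a := by omega

lemma key {V : Type*} [Fintype V] (n : ℕ) :
    ∀ (G : SimpleGraph V), G.IsAcyclic →
    ∀ (R : Set V) (c : V → Fin 2),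
    (2 * G.edgeSet.ncard + 1 ≤ n ∨ (2 * G.edgeSet.ncard ≤ n ∧ ∃ r ∈ R, ∃ u, G.Adj r u)) →
    (∀ r ∈ R, ∀ s ∈ R, r ≠ s → ¬ G.Reachable r s) →
    ∃ φ : Sym2 V → Fin 2,
      (∀ v ∉ R, ∀ j : Fin 2,
        {e | e ∈ G.edgeSet ∧ φ e = j ∧ v ∈ e}.ncard = 0 ∨
          Odd {e | e ∈ G.edgeSet ∧ φ e = j ∧ v ∈ e}.ncard) ∧
      (∀ r ∈ R, ∀ e ∈ G.edgeSet, r ∈ e → φ e = c r) := by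
  induction n with
  | zero =>
    intro G hG R c hm hR
    exfalso
    rcases hm with hm | ⟨hm, r, hrR, u, hru⟩
    · omega
    · have : 0 < G.edgeSet.ncard := (Set.ncard_pos (Set.toFinite _)).mpr ⟨s(r, u), hru⟩
      omega
  | succ n IH =>
    intro G hG R c hm hR
    classical
    by_cases hEadj : ∃ r ∈ R, ∃ u, G.Adj r u
    · -- Case B1: some root has an incident edge
      obtain ⟨r, hrR, u, hru⟩ := hEadj
      set ε : Sym2 V := s(r, u) with hεdef
      have hεE : ε ∈ G.edgeSet := hru
      set G' := G.deleteEdges {ε} with hG'def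
      have hG'le : G' ≤ G := SimpleGraph.deleteEdges_le _
      have hG'acyclic : G'.IsAcyclic := fun v p hp => hG (p.mapLe hG'le) (hp.mapLe hG'le)
      have hbridge : ¬ G'.Reachable r u := by
        have hb := (isAcyclic_iff_forall_adj_isBridge.mp hG) hru
        rw [isBridge_iff] at hb
        exact hb
      have huR : u ∉ R := fun huR => hR r hrR u huR hru.ne hru.reachable
      have hE' : G'.edgeSet = G.edgeSet \ {ε} := by
        rw [hG'def, SimpleGraph.edgeSet_deleteEdges]
      set d := {e | e ∈ G.edgeSet ∧ u ∈ e}.ncard with hddef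
      have hεmem : ε ∈ {e | e ∈ G.edgeSet ∧ u ∈ e} := ⟨hεE, by simp [hεdef]⟩
      have hd1 : 0 < d := (Set.ncard_pos (Set.toFinite _)).mpr ⟨ε, hεmem⟩
      set γ : Fin 2 := if Odd d then c r else c r + 1 with hγdef
      set c' : V → Fin 2 := Function.update c u γ with hc'def
      set R' : Set V := insert u R with hR'def
      have hE'card : G'.edgeSet.ncard = G.edgeSet.ncard - 1 := by
        rw [hE']
        exact Set.ncard_diff_singleton_of_mem hεE
      have hEcard1 : 1 ≤ G.edgeSet.ncard := (Set.ncard_pos (Set.toFinite _)).mpr ⟨ε, hεE⟩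
      have hmn : 2 * G.edgeSet.ncard ≤ n + 1 := by rcases hm with h | ⟨h, _⟩ <;> omega
      have hm' : 2 * G'.edgeSet.ncard + 1 ≤ n := by omega
      have hR'pair : ∀ x ∈ R', ∀ y ∈ R', x ≠ y → ¬ G'.Reachable x y := by
        intro x hx y hy hxy hreach
        rcases hx with rfl | hx
        · rcases hy with rfl | hy
          · exact hxy rfl
          · -- x = u, y ∈ R
            by_cases hyr : y = r
            · subst hyr; exact hbridge hreach.symm
            · exact hR r hrR y hy (Ne.symm hyr)
                (hru.reachable.trans (hreach.mono hG'le))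
        · rcases hy with rfl | hy
          · by_cases hxr : x = r
            · subst hxr; exact hbridge hreach
            · exact hR r hrR x hx (Ne.symm hxr)
                (hru.reachable.trans (hreach.mono hG'le).symm)
          · exact hR x hx y hy hxy (hreach.mono hG'le)
      obtain ⟨φ', hgood', hroot'⟩ := IH G' hG'acyclic R' c' (Or.inl hm') hR'pair
      set φ : Sym2 V → Fin 2 := fun x => if x = ε then c r else φ' x with hφdef
      have hφε : φ ε = c r := by simp [hφdef]
      have hφne : ∀ x, x ≠ ε → φ x = φ' x := by intro x hx; simp [hφdef, hx]
      have hc'u : c' u = γ := Function.update_self u γ c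
      have hrootu : ∀ x ∈ G'.edgeSet, u ∈ x → φ' x = γ := by
        intro x hx hux
        rw [hroot' u (Set.mem_insert u R) x hx hux, hc'u]
      refine ⟨φ, ?_, ?_⟩
      · -- goodness
        intro v hv j
        by_cases hvu : v = u
        · subst hvu
          have hD'γ : {x | x ∈ G'.edgeSet ∧ φ' x = γ ∧ v ∈ x}
              = {x | x ∈ G.edgeSet ∧ v ∈ x} \ {ε} := by
            ext x
            simp only [Set.mem_setOf_eq, Set.mem_diff, Set.mem_singleton_iff, hE']
            constructor
            · rintro ⟨⟨h1, h2⟩, _, h3⟩; exact ⟨⟨h1, h3⟩, h2⟩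
            · rintro ⟨⟨h1, h3⟩, h2⟩
              exact ⟨⟨h1, h2⟩, hrootu x (by rw [hE']; exact ⟨h1, h2⟩) h3, h3⟩
          have hD'γcard : {x | x ∈ G'.edgeSet ∧ φ' x = γ ∧ v ∈ x}.ncard = d - 1 := by
            rw [hD'γ]
            exact Set.ncard_diff_singleton_of_mem hεmem
          by_cases hodd : Odd d
          · have hγ : γ = c r := by rw [hγdef, if_pos hodd]
            rcases fin2_cases j (c r) with hj | hj
            · subst hj
              right
              have : {x | x ∈ G.edgeSet ∧ φ x = c r ∧ v ∈ x}
                  = insert ε {x | x ∈ G'.edgeSet ∧ φ' x = γ ∧ v ∈ x} := by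
                ext x
                simp only [Set.mem_setOf_eq, Set.mem_insert_iff]
                constructor
                · rintro ⟨h1, h2, h3⟩
                  by_cases hx : x = ε
                  · exact Or.inl hx
                  · exact Or.inr ⟨by rw [hE']; exact ⟨h1, hx⟩, by rw [hγ, ← hφne x hx]; exact h2, h3⟩
                · rintro (rfl | ⟨h1, h2, h3⟩)
                  · exact ⟨hεE, hφε, by simp [hεdef]⟩
                  · rw [hE'] at h1
                    exact ⟨h1.1, by rw [hφne x h1.2, h2, hγ], h3⟩
              rw [this, Set.ncard_insert_of_notMem (by rw [hE']; exact fun h => h.1.2 rfl)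
                (Set.toFinite _), hD'γcard]
              have : d - 1 + 1 = d := by omega
              rw [this]; exact hodd
            · -- j = c r + 1 : empty
              subst hj
              left
              rw [Set.ncard_eq_zero (Set.toFinite _)]
              ext x
              simp only [Set.mem_setOf_eq, Set.mem_empty_iff_false, iff_false]
              rintro ⟨h1, h2, h3⟩
              by_cases hx : x = ε
              · subst hx; rw [hφε] at h2; exact fin2_succ_ne (c r) h2.symm
              · have := hrootu x (by rw [hE']; exact ⟨h1, hx⟩) h3
                rw [hφne x hx, this, hγ] at h2
                exact fin2_succ_ne (c r) h2.symm
          · have hγ : γ = c r + 1 := by rw [hγdef, if_neg hodd]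
            have heven : Even d := Nat.not_odd_iff_even.mp hodd
            rcases fin2_cases j (c r) with hj | hj
            · subst hj
              right
              have : {x | x ∈ G.edgeSet ∧ φ x = c r ∧ v ∈ x} = {ε} := by
                ext x
                simp only [Set.mem_setOf_eq, Set.mem_singleton_iff]
                constructor
                · rintro ⟨h1, h2, h3⟩
                  by_contra hx
                  have := hrootu x (by rw [hE']; exact ⟨h1, hx⟩) h3
                  rw [hφne x hx, this, hγ] at h2
                  exact fin2_succ_ne (c r) h2
                · rintro rfl
                  exact ⟨hεE, hφε, by simp [hεdef]⟩
              rw [this, Set.ncard_singleton]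
              exact odd_one
            · subst hj
              right
              have : {x | x ∈ G.edgeSet ∧ φ x = c r + 1 ∧ v ∈ x}
                  = {x | x ∈ G'.edgeSet ∧ φ' x = γ ∧ v ∈ x} := by
                ext x
                simp only [Set.mem_setOf_eq]
                constructor
                · rintro ⟨h1, h2, h3⟩
                  have hx : x ≠ ε := by
                    rintro rfl
                    rw [hφε] at h2
                    exact fin2_succ_ne (c r) h2.symm
                  exact ⟨by rw [hE']; exact ⟨h1, hx⟩, by rw [← hφne x hx, h2, hγ], h3⟩
                · rintro ⟨h1, h2, h3⟩
                  rw [hE'] at h1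
                  exact ⟨h1.1, by rw [hφne x h1.2, h2, hγ], h3⟩
              rw [this, hD'γcard]
              obtain ⟨k, hk⟩ := heven
              exact ⟨k - 1, by omega⟩
        · -- v ≠ u, v ∉ R
          have hvε : v ∉ ε := by
            rw [hεdef, Sym2.mem_iff]
            rintro (rfl | rfl)
            · exact hv hrR
            · exact hvu rfl
          have : {x | x ∈ G.edgeSet ∧ φ x = j ∧ v ∈ x}
              = {x | x ∈ G'.edgeSet ∧ φ' x = j ∧ v ∈ x} := by
            ext x
            simp only [Set.mem_setOf_eq]
            constructor
            · rintro ⟨h1, h2, h3⟩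
              have hx : x ≠ ε := by rintro rfl; exact hvε h3
              exact ⟨by rw [hE']; exact ⟨h1, hx⟩, by rw [← hφne x hx]; exact h2, h3⟩
            · rintro ⟨h1, h2, h3⟩
              rw [hE'] at h1
              exact ⟨h1.1, by rw [hφne x h1.2]; exact h2, h3⟩
          rw [this]
          exact hgood' v (by rw [hR'def]; rintro (rfl | h); exacts [hvu rfl, hv h]) j
      · -- root condition
        intro s hs e heE hse
        by_cases hx : e = ε
        · subst hx
          rcases Sym2.mem_iff.mp hse with rfl | rfl
          · exact hφε
          · exact absurd hs huR
        · rw [hφne e hx, hroot' s (Set.mem_insert_of_mem u hs) e (by rw [hE']; exact ⟨heE, hx⟩) hse,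
            hc'def]
          have hsu : s ≠ u := fun hh => huR (hh ▸ hs)
          exact Function.update_of_ne hsu γ c
    · -- Case B2: no root has an incident edge
      have hmn : 2 * G.edgeSet.ncard + 1 ≤ n + 1 := by
        rcases hm with h | ⟨_, h⟩; exacts [h, absurd h hEadj]
      by_cases hE : G.edgeSet.Nonempty
      · obtain ⟨l, cl, hlcl, huniq⟩ := exists_leaf hG hE
        have hlR : l ∉ R := fun h => hEadj ⟨l, h, cl, hlcl⟩
        set c' : V → Fin 2 := Function.update c l 0 with hc'def
        set R' : Set V := insert l R with hR'def
        have hnoedge : ∀ s ∈ R, ∀ w, ¬ G.Adj s w := by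
          intro s hs w hsw
          exact hEadj ⟨s, hs, w, hsw⟩
        have hnoreach : ∀ s ∈ R, ∀ t, s ≠ t → ¬ G.Reachable s t := by
          intro s hs t hst ⟨w⟩
          cases w with
          | nil => exact hst rfl
          | cons h _ => exact hnoedge s hs _ h
        have hR'pair : ∀ x ∈ R', ∀ y ∈ R', x ≠ y → ¬ G.Reachable x y := by
          intro x hx y hy hxy hreach
          rcases hx with rfl | hx
          · rcases hy with rfl | hy
            · exact hxy rfl
            · exact hnoreach y hy x (Ne.symm hxy) hreach.symm
          · rcases hy with rfl | hy
            · exact hnoreach x hx y hxy hreach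
            · exact hnoreach x hx y hxy hreach
        obtain ⟨φ', hgood', hroot'⟩ := IH G hG R' c'
          (Or.inr ⟨by omega, l, Set.mem_insert l R, cl, hlcl⟩) hR'pair
        have hc'l : c' l = 0 := Function.update_self l 0 c
        have hrootl : ∀ x ∈ G.edgeSet, l ∈ x → φ' x = 0 := by
          intro x hx hlx
          rw [hroot' l (Set.mem_insert l R) x hx hlx, hc'l]
        have hinc : {x | x ∈ G.edgeSet ∧ l ∈ x} = {s(l, cl)} := by
          ext x
          induction x using Sym2.ind with
          | _ a b =>
            simp only [Set.mem_setOf_eq, Set.mem_singleton_iff, SimpleGraph.mem_edgeSet,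
              Sym2.mem_iff]
            constructor
            · rintro ⟨hab, rfl | rfl⟩
              · rw [huniq b hab]
              · rw [huniq a hab.symm]
                exact Sym2.eq_swap
            · intro h
              rw [Sym2.eq_iff] at h
              rcases h with ⟨rfl, rfl⟩ | ⟨rfl, rfl⟩
              · exact ⟨hlcl, Or.inl rfl⟩
              · exact ⟨hlcl.symm, Or.inr rfl⟩
        refine ⟨φ', ?_, ?_⟩
        · intro v hv j
          by_cases hvl : v = l
          · subst hvl
            rcases fin2_cases j 0 with hj | hj
            · subst hj
              right
              have : {x | x ∈ G.edgeSet ∧ φ' x = 0 ∧ v ∈ x} = {x | x ∈ G.edgeSet ∧ v ∈ x} := by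
                ext x
                simp only [Set.mem_setOf_eq]
                exact ⟨fun ⟨h1, _, h3⟩ => ⟨h1, h3⟩, fun ⟨h1, h3⟩ => ⟨h1, hrootl x h1 h3, h3⟩⟩
              rw [this, hinc, Set.ncard_singleton]
              exact odd_one
            · subst hj
              left
              rw [Set.ncard_eq_zero (Set.toFinite _)]
              ext x
              simp only [Set.mem_setOf_eq, Set.mem_empty_iff_false, iff_false]
              rintro ⟨h1, h2, h3⟩
              rw [hrootl x h1 h3] at h2
              exact fin2_succ_ne 0 h2.symm
          · exact hgood' v (by rw [hR'def]; rintro (rfl | h); exacts [hvl rfl, hv h]) j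
        · intro s hs e he hse
          rw [hroot' s (Set.mem_insert_of_mem l hs) e he hse, hc'def]
          have hsl : s ≠ l := fun hh => hlR (hh ▸ hs)
          exact Function.update_of_ne hsl 0 c
      · -- no edges at all
        have hEempty : G.edgeSet = ∅ := Set.not_nonempty_iff_eq_empty.mp hE
        refine ⟨fun _ => 0, ?_, ?_⟩
        · intro v _ j
          left
          rw [Set.ncard_eq_zero (Set.toFinite _)]
          ext x
          simp [hEempty]
        · intro s _ e he
          rw [hEempty] at he
          exact absurd he (Set.notMem_empty e)

/-- Every forest admits an edge-coloring with 2 colors such that each color class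
induces a subgraph in which every non-isolated vertex has odd degree. -/
theorem stmt_0 {V : Type*} [Fintype V] (G : SimpleGraph V) (hG : G.IsAcyclic) :
    ∃ φ : Sym2 V → Fin 2, ∀ (v : V) (j : Fin 2),
      {e | e ∈ G.edgeSet ∧ φ e = j ∧ v ∈ e}.ncard = 0 ∨
        Odd {e | e ∈ G.edgeSet ∧ φ e = j ∧ v ∈ e}.ncard := by
  obtain ⟨φ, hgood, -⟩ := key (2 * G.edgeSet.ncard + 1) G hG ∅ (fun _ => 0)
    (Or.inl le_rfl) (by simp)
  exact ⟨φ, fun v j => hgood v (Set.notMem_empty v) j⟩
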